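/- Let K_{ℓ1,...,ℓk} be the complete k-partite graph on n = ℓ1 + ⋯ + ℓk vertices with parts of sizes ℓ1 ≥ ⋯ ≥ ℓk ≥ 1 and k ≥ 2, and let p be the number of parts of size at least 2. Then the distance Laplacian spectrum of K_{ℓ1,...,ℓk} consists of the eigenvalue n + ℓj with multiplicity ℓj − 1 for each 1 ≤ j ≤ p, the eigenvalue n with multiplicity k − 1, and the eigenvalue 0 with multiplicity 1. -/

import Mathlib

open Finset Polynomial

/-- The complete multipartite graph with parts `Fin (ℓ j)`, `j : Fin k`. -/
def completeMultipartiteGraph' {k : ℕ} (ℓ : Fin k → ℕ) :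
    SimpleGraph (Σ j : Fin k, Fin (ℓ j)) where
  Adj a b := a.1 ≠ b.1
  symm := ⟨fun _ _ h => Ne.symm h⟩
  loopless := ⟨fun _ h => h rfl⟩

/-- Transmission of a vertex. -/
noncomputable def transmission {V : Type*} [Fintype V] (G : SimpleGraph V) (v : V) : ℕ :=
  ∑ u : V, G.dist u v

/-- The distance Laplacian matrix `DL(G) = Tr(G) − D(G)`. -/
noncomputable def distLap {V : Type*} [Fintype V] [DecidableEq V] (G : SimpleGraph V) :
    Matrix V V ℝ :=
  Matrix.diagonal (fun v => (transmission G v : ℝ)) -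
    Matrix.of (fun u v => (G.dist u v : ℝ))

namespace DLaux

variable {k : ℕ} (ℓ : Fin k → ℕ)

/-- The "first" vertex of a part. -/
def zed (hpos : ∀ j, 1 ≤ ℓ j) (j : Fin k) : Fin (ℓ j) := ⟨0, hpos j⟩

/-- The conjugating matrix whose rows are eigenvectors of the distance Laplacian. -/
def Pm [NeZero k] (hpos : ∀ j, 1 ≤ ℓ j) : Matrix (Σ j : Fin k, Fin (ℓ j)) (Σ j : Fin k, Fin (ℓ j)) ℝ :=
  fun v w =>
    if v.2.val = 0 then
      (if v.1 = 0 then 1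
       else if w.1 = v.1 then (ℓ 0 : ℝ) else if w.1 = 0 then -(ℓ v.1 : ℝ) else 0)
    else
      (if w = ⟨v.1, zed ℓ hpos v.1⟩ then 1 else 0) - (if w = v then 1 else 0)

/-- The eigenvalues. -/
def dfun [NeZero k] (n : ℕ) : (Σ j : Fin k, Fin (ℓ j)) → ℝ :=
  fun v => if v.2.val = 0 then (if v.1 = 0 then 0 else (n : ℝ)) else (n : ℝ) + ℓ v.1

lemma dist_eq (hk : 2 ≤ k) (hpos : ∀ j, 1 ≤ ℓ j) (u v : Σ j : Fin k, Fin (ℓ j)) :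
    (completeMultipartiteGraph' ℓ).dist u v =
      if u = v then 0 else if u.1 = v.1 then 2 else 1 := by
  by_cases huv : u = v
  · simp [huv]
  rw [if_neg huv]
  by_cases h1 : u.1 = v.1
  · rw [if_pos h1]
    haveI : Nontrivial (Fin k) := Fintype.one_lt_card_iff_nontrivial.mp (by simp; omega)
    obtain ⟨j', hj'⟩ := exists_ne u.1
    set m : Σ j : Fin k, Fin (ℓ j) := ⟨j', ⟨0, hpos j'⟩⟩ with hm
    have ha1 : (completeMultipartiteGraph' ℓ).Adj u m := show u.1 ≠ m.1 from fun h => hj' h.symm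
    have ha2 : (completeMultipartiteGraph' ℓ).Adj m v := by
      show m.1 ≠ v.1
      intro h
      exact hj' (h.trans h1.symm)
    let w : (completeMultipartiteGraph' ℓ).Walk u v :=
      SimpleGraph.Walk.cons ha1 (SimpleGraph.Walk.cons ha2 SimpleGraph.Walk.nil)
    have hle : (completeMultipartiteGraph' ℓ).dist u v ≤ 2 := by
      have := SimpleGraph.dist_le w
      simpa [w] using this
    have hr : (completeMultipartiteGraph' ℓ).Reachable u v := ⟨w⟩
    have hpos' : 0 < (completeMultipartiteGraph' ℓ).dist u v := hr.pos_dist_of_ne huv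
    have hne1 : (completeMultipartiteGraph' ℓ).dist u v ≠ 1 := by
      intro h
      exact (show u.1 ≠ v.1 from SimpleGraph.dist_eq_one_iff_adj.mp h) h1
    omega
  · rw [if_neg h1]
    exact SimpleGraph.dist_eq_one_iff_adj.mpr (show u.1 ≠ v.1 from h1)

lemma sum_fiber (f : Fin k → ℝ) :
    ∑ u : Σ j : Fin k, Fin (ℓ j), f u.1 = ∑ j, (ℓ j : ℝ) * f j := by
  rw [← Finset.univ_sigma_univ, Finset.sum_sigma]
  simp [mul_comm]

lemma card_part (j0 : Fin k) :
    ∑ u : Σ j : Fin k, Fin (ℓ j), (if u.1 = j0 then (1:ℝ) else 0) = (ℓ j0 : ℝ) := by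
  have h := sum_fiber ℓ (fun j => if j = j0 then (1:ℝ) else 0)
  simp only [mul_ite, mul_one, mul_zero] at h
  rw [h, Finset.sum_ite_eq' Finset.univ j0 (fun j => (ℓ j : ℝ))]
  simp

lemma sum_part (j0 : Fin k) (c : ℝ) :
    ∑ u : Σ j : Fin k, Fin (ℓ j), (if u.1 = j0 then c else 0) = (ℓ j0 : ℝ) * c := by
  have h := sum_fiber ℓ (fun j => if j = j0 then c else 0)
  simp only [mul_ite, mul_zero] at h
  rw [h, Finset.sum_ite_eq' Finset.univ j0 (fun j => (ℓ j : ℝ) * c)]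
  simp

lemma delta_mul (b : Σ j : Fin k, Fin (ℓ j)) (f : (Σ j : Fin k, Fin (ℓ j)) → ℝ) :
    ∑ u : Σ j : Fin k, Fin (ℓ j), (if u = b then (1:ℝ) else 0) * f u = f b := by
  have h : ∀ u : Σ j : Fin k, Fin (ℓ j),
      (if u = b then (1:ℝ) else 0) * f u = if u = b then f b else 0 := by
    intro u
    by_cases h : u = b
    · rw [if_pos h, if_pos h, h, one_mul]
    · simp [h]
  rw [Finset.sum_congr rfl (fun u _ => h u),
    Finset.sum_ite_eq' Finset.univ b (fun _ => f b)]
  simp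

lemma row_part_sum (g : Fin k → ℝ) (p : (Σ j : Fin k, Fin (ℓ j)) → ℝ)
    (hg : ∀ u, p u = g u.1) (b : Fin k) :
    ∑ u : Σ j : Fin k, Fin (ℓ j), p u * (if u.1 = b then (1:ℝ) else 0) = (ℓ b : ℝ) * g b := by
  have h : ∀ u : Σ j : Fin k, Fin (ℓ j),
      p u * (if u.1 = b then (1:ℝ) else 0) = if u.1 = b then g b else 0 := by
    intro u
    by_cases h : u.1 = b
    · rw [if_pos h, if_pos h, hg, h, mul_one]
    · simp [h]
  rw [Finset.sum_congr rfl (fun u _ => h u), sum_part]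

lemma row_full_sum (g : Fin k → ℝ) (p : (Σ j : Fin k, Fin (ℓ j)) → ℝ)
    (hg : ∀ u, p u = g u.1) :
    ∑ u : Σ j : Fin k, Fin (ℓ j), p u = ∑ j, (ℓ j : ℝ) * g j := by
  rw [Finset.sum_congr rfl (fun u _ => hg u), sum_fiber]

lemma trans_eq (hk : 2 ≤ k) (hpos : ∀ j, 1 ≤ ℓ j) (n : ℕ) (hn : n = ∑ j, ℓ j)
    (v : Σ j : Fin k, Fin (ℓ j)) :
    (transmission (completeMultipartiteGraph' ℓ) v : ℝ) = (n : ℝ) + (ℓ v.1 : ℝ) - 2 := by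
  unfold transmission
  push_cast
  have hrw : ∀ u : Σ j : Fin k, Fin (ℓ j), ((completeMultipartiteGraph' ℓ).dist u v : ℝ)
      = 1 + (if u.1 = v.1 then (1:ℝ) else 0) - (if u = v then (2:ℝ) else 0) := by
    intro u
    rw [dist_eq ℓ hk hpos]
    by_cases h : u = v
    · simp [h]; norm_num
    · rw [if_neg h]
      by_cases h1 : u.1 = v.1 <;> simp [h, h1] <;> norm_num
  rw [Finset.sum_congr rfl (fun u _ => hrw u), Finset.sum_sub_distrib,
    Finset.sum_add_distrib, card_part, Finset.sum_const,
    Finset.sum_ite_eq' Finset.univ v (fun _ => (2:ℝ))]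
  simp only [Finset.card_univ, Fintype.card_sigma, Fintype.card_fin, Finset.mem_univ, if_pos,
    nsmul_eq_mul, mul_one]
  rw [hn]
  try push_cast
  try ring

lemma dl_eq (hk : 2 ≤ k) (hpos : ∀ j, 1 ≤ ℓ j) (n : ℕ) (hn : n = ∑ j, ℓ j)
    (u v : Σ j : Fin k, Fin (ℓ j)) :
    distLap (completeMultipartiteGraph' ℓ) u v =
      (if u = v then ((n : ℝ) + (ℓ v.1 : ℝ)) else 0) -
        (if u.1 = v.1 then (1:ℝ) else 0) - 1 := by
  unfold distLap
  rw [Matrix.sub_apply]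
  by_cases h : u = v
  · subst h
    rw [Matrix.diagonal_apply_eq, trans_eq ℓ hk hpos n hn]
    simp [SimpleGraph.dist_self]
    ring
  · rw [Matrix.diagonal_apply_ne _ h]
    simp only [Matrix.of_apply]
    rw [dist_eq ℓ hk hpos, if_neg h, if_neg h]
    by_cases h1 : u.1 = v.1 <;> simp [h1] <;> try ring

lemma key [NeZero k] (hk : 2 ≤ k) (hpos : ∀ j, 1 ≤ ℓ j) (n : ℕ) (hn : n = ∑ j, ℓ j) :
    Pm ℓ hpos * distLap (completeMultipartiteGraph' ℓ) =
      Matrix.diagonal (dfun ℓ n) * Pm ℓ hpos := by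
  ext v w
  rw [Matrix.mul_apply, Matrix.diagonal_mul]
  have h1 : ∀ u, Pm ℓ hpos v u * distLap (completeMultipartiteGraph' ℓ) u w
      = (if u = w then Pm ℓ hpos v u * ((n:ℝ) + (ℓ w.1 : ℝ)) else 0)
        - Pm ℓ hpos v u * (if u.1 = w.1 then (1:ℝ) else 0) - Pm ℓ hpos v u := by
    intro u
    rw [dl_eq ℓ hk hpos n hn]
    by_cases h : u = w
    · rw [if_pos h, if_pos h]
      ring
    · rw [if_neg h, if_neg h]
      ring
  rw [Finset.sum_congr rfl (fun u _ => h1 u), Finset.sum_sub_distrib, Finset.sum_sub_distrib,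
    Finset.sum_ite_eq' Finset.univ w (fun u => Pm ℓ hpos v u * ((n:ℝ) + (ℓ w.1 : ℝ)))]
  simp only [Finset.mem_univ, if_pos, ite_true]
  by_cases hv2 : v.2.val = 0
  · by_cases hv1 : v.1 = 0
    · -- all-ones row, eigenvalue 0
      have hg : ∀ u : Σ j : Fin k, Fin (ℓ j), Pm ℓ hpos v u = (fun _ : Fin k => (1:ℝ)) u.1 := by
        intro u; simp [Pm, hv2, hv1]
      rw [row_part_sum ℓ (fun _ : Fin k => (1:ℝ)) (Pm ℓ hpos v) hg,
        row_full_sum ℓ (fun _ : Fin k => (1:ℝ)) (Pm ℓ hpos v) hg, hg w]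
      simp only [dfun, hv2, hv1, if_pos, ite_true, mul_one]
      have hsum : ∑ x : Fin k, (ℓ x : ℝ) = (n : ℝ) := by
        rw [hn]
        push_cast
        ring
      rw [hsum]
      ring
    · -- part-indicator row, eigenvalue n
      set g : Fin k → ℝ := fun j =>
        if j = v.1 then (ℓ 0 : ℝ) else if j = 0 then -(ℓ v.1 : ℝ) else 0 with hgdef
      have hg : ∀ u : Σ j : Fin k, Fin (ℓ j), Pm ℓ hpos v u = g u.1 := by
        intro u; simp [Pm, hv2, hv1, hgdef]
      have hS3 : ∑ j, (ℓ j : ℝ) * g j = 0 := by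
        have hpt : ∀ j : Fin k, (ℓ j : ℝ) * g j =
            (if j = v.1 then (ℓ j : ℝ) * (ℓ 0 : ℝ) else 0)
              + (if j = 0 then (ℓ j : ℝ) * (-(ℓ v.1 : ℝ)) else 0) := by
          intro j
          have hv1' : ¬ (0 : Fin k) = v.1 := fun hh => hv1 hh.symm
          by_cases h : j = v.1
          · have h0 : ¬ j = 0 := by rw [h]; exact hv1
            simp [hgdef, h, h0, hv1, hv1']
          · by_cases h0 : j = 0 <;> simp [hgdef, h, h0, hv1, hv1'] <;> try ring
        rw [Finset.sum_congr rfl (fun j _ => hpt j), Finset.sum_add_distrib,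
          Finset.sum_ite_eq' Finset.univ v.1 (fun j => (ℓ j : ℝ) * (ℓ 0 : ℝ)),
          Finset.sum_ite_eq' Finset.univ (0 : Fin k) (fun j => (ℓ j : ℝ) * (-(ℓ v.1 : ℝ)))]
        simp
        ring
      rw [row_part_sum ℓ g (Pm ℓ hpos v) hg, row_full_sum ℓ g (Pm ℓ hpos v) hg, hS3, hg w]
      simp only [dfun, hv2, hv1, if_pos, ite_true, if_false, ite_false]
      ring
  · -- difference row, eigenvalue n + ℓ v.1
    set vz : Σ j : Fin k, Fin (ℓ j) := ⟨v.1, zed ℓ hpos v.1⟩ with hvz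
    have hg : ∀ u : Σ j : Fin k, Fin (ℓ j), Pm ℓ hpos v u =
        (if u = vz then (1:ℝ) else 0) - (if u = v then (1:ℝ) else 0) := by
      intro u; simp [Pm, hv2, hvz]
    have hS3 : ∑ u : Σ j : Fin k, Fin (ℓ j), Pm ℓ hpos v u = 0 := by
      rw [Finset.sum_congr rfl (fun u _ => hg u), Finset.sum_sub_distrib,
        Finset.sum_ite_eq' Finset.univ vz (fun _ => (1:ℝ)),
        Finset.sum_ite_eq' Finset.univ v (fun _ => (1:ℝ))]
      simp
    have hS2 : ∑ u : Σ j : Fin k, Fin (ℓ j),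
        Pm ℓ hpos v u * (if u.1 = w.1 then (1:ℝ) else 0) = 0 := by
      have hpt : ∀ u : Σ j : Fin k, Fin (ℓ j),
          Pm ℓ hpos v u * (if u.1 = w.1 then (1:ℝ) else 0) =
            (if u = vz then (1:ℝ) else 0) * (if u.1 = w.1 then (1:ℝ) else 0)
              - (if u = v then (1:ℝ) else 0) * (if u.1 = w.1 then (1:ℝ) else 0) := by
        intro u; rw [hg u]; ring
      rw [Finset.sum_congr rfl (fun u _ => hpt u), Finset.sum_sub_distrib,
        delta_mul ℓ vz (fun u => if u.1 = w.1 then (1:ℝ) else 0),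
        delta_mul ℓ v (fun u => if u.1 = w.1 then (1:ℝ) else 0)]
      simp [hvz]
    rw [hS3, hS2]
    simp only [dfun, hv2, if_neg hv2, ite_false]
    by_cases hw : w.1 = v.1
    · have hℓ : (ℓ w.1 : ℝ) = (ℓ v.1 : ℝ) := by rw [hw]
      rw [hℓ]
      ring
    · have h0 : Pm ℓ hpos v w = 0 := by
        rw [hg w, if_neg (fun h => hw (by rw [h])), if_neg (fun h => hw (by rw [h]))]
        ring
      rw [h0]
      ring

lemma pm_ker [NeZero k] (hpos : ∀ j, 1 ≤ ℓ j) (x : (Σ j : Fin k, Fin (ℓ j)) → ℝ)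
    (hx : (Pm ℓ hpos).mulVec x = 0) : x = 0 := by
  have hrow : ∀ v : Σ j : Fin k, Fin (ℓ j), ∑ u, Pm ℓ hpos v u * x u = 0 := by
    intro v
    have h := congrFun hx v
    simpa [Matrix.mulVec, dotProduct] using h
  -- x is constant on each part
  have hconst : ∀ (j : Fin k) (i : Fin (ℓ j)), x ⟨j, i⟩ = x ⟨j, zed ℓ hpos j⟩ := by
    intro j i
    by_cases hi : i.val = 0
    · have : i = zed ℓ hpos j := Fin.ext hi
      rw [this]
    · have h := hrow ⟨j, i⟩
      have hg : ∀ u : Σ j : Fin k, Fin (ℓ j), Pm ℓ hpos ⟨j, i⟩ u =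
          (if u = (⟨j, zed ℓ hpos j⟩ : Σ j : Fin k, Fin (ℓ j)) then (1:ℝ) else 0)
            - (if u = (⟨j, i⟩ : Σ j : Fin k, Fin (ℓ j)) then (1:ℝ) else 0) := by
        intro u; simp [Pm, hi]
      have h2 : ∀ u : Σ j : Fin k, Fin (ℓ j), Pm ℓ hpos ⟨j, i⟩ u * x u =
          (if u = (⟨j, zed ℓ hpos j⟩ : Σ j : Fin k, Fin (ℓ j)) then (1:ℝ) else 0) * x u
            - (if u = (⟨j, i⟩ : Σ j : Fin k, Fin (ℓ j)) then (1:ℝ) else 0) * x u := by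
        intro u; rw [hg u]; ring
      rw [Finset.sum_congr rfl (fun u _ => h2 u), Finset.sum_sub_distrib,
        delta_mul ℓ _ x, delta_mul ℓ _ x] at h
      linarith
  -- sums against fiber functions
  have hsum : ∀ g : Fin k → ℝ, ∑ u : Σ j : Fin k, Fin (ℓ j), g u.1 * x u
      = ∑ j, g j * ((ℓ j : ℝ) * x ⟨j, zed ℓ hpos j⟩) := by
    intro g
    rw [← Finset.univ_sigma_univ, Finset.sum_sigma]
    refine Finset.sum_congr rfl fun j _ => ?_
    rw [Finset.sum_congr rfl (fun i _ => by rw [hconst j i] :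
      ∀ i ∈ Finset.univ, g j * x ⟨j, i⟩ = g j * x ⟨j, zed ℓ hpos j⟩),
      Finset.sum_const, Finset.card_univ, Fintype.card_fin, nsmul_eq_mul]
    ring
  -- the common value on part 0 is zero
  haveI : Nonempty (Fin k) := ⟨⟨0, Nat.pos_of_ne_zero (NeZero.ne k)⟩⟩
  -- all parts share the same value
  have hc : ∀ j : Fin k, x ⟨j, zed ℓ hpos j⟩ = x ⟨0, zed ℓ hpos 0⟩ := by
    intro j
    by_cases hj : j = 0
    · subst hj; rfl
    · have h := hrow ⟨j, zed ℓ hpos j⟩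
      have hg : ∀ u : Σ j' : Fin k, Fin (ℓ j'), Pm ℓ hpos ⟨j, zed ℓ hpos j⟩ u =
          (fun j' => if j' = j then (ℓ 0 : ℝ) else if j' = 0 then -(ℓ j : ℝ) else 0) u.1 := by
        intro u; simp [Pm, zed, hj]
      rw [Finset.sum_congr rfl (fun u _ => by rw [hg u]),
        hsum (fun j' => if j' = j then (ℓ 0 : ℝ) else if j' = 0 then -(ℓ j : ℝ) else 0)] at h
      have hpt : ∀ j' : Fin k,
          (if j' = j then (ℓ 0 : ℝ) else if j' = 0 then -(ℓ j : ℝ) else 0)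
              * ((ℓ j' : ℝ) * x ⟨j', zed ℓ hpos j'⟩)
            = (if j' = j then (ℓ 0 : ℝ) * ((ℓ j' : ℝ) * x ⟨j', zed ℓ hpos j'⟩) else 0)
              + (if j' = 0 then -(ℓ j : ℝ) * ((ℓ j' : ℝ) * x ⟨j', zed ℓ hpos j'⟩) else 0) := by
        intro j'
        have hj' : ¬ (0 : Fin k) = j := fun hh => hj hh.symm
        by_cases h1 : j' = j
        · have h0 : ¬ j' = 0 := by rw [h1]; exact hj
          simp [h1, h0, hj, hj']
        · by_cases h0 : j' = 0 <;> simp [h1, h0, hj, hj'] <;> try ring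
      rw [Finset.sum_congr rfl (fun j' _ => hpt j'), Finset.sum_add_distrib,
        Finset.sum_ite_eq' Finset.univ j
          (fun j' => (ℓ 0 : ℝ) * ((ℓ j' : ℝ) * x ⟨j', zed ℓ hpos j'⟩)),
        Finset.sum_ite_eq' Finset.univ (0 : Fin k)
          (fun j' => -(ℓ j : ℝ) * ((ℓ j' : ℝ) * x ⟨j', zed ℓ hpos j'⟩))] at h
      simp only [Finset.mem_univ, if_pos, ite_true] at h
      have hprod : ((ℓ 0 : ℝ) * (ℓ j : ℝ)) *
          (x ⟨j, zed ℓ hpos j⟩ - x ⟨0, zed ℓ hpos 0⟩) = 0 := by linarith [h]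
      have hne : ((ℓ 0 : ℝ) * (ℓ j : ℝ)) ≠ 0 := by
        have h0 : (0:ℝ) < (ℓ 0 : ℝ) := by exact_mod_cast hpos 0
        have hjj : (0:ℝ) < (ℓ j : ℝ) := by exact_mod_cast hpos j
        positivity
      have := mul_eq_zero.mp hprod
      rcases this with h' | h'
      · exact absurd h' hne
      · linarith
  have hc0 : x ⟨0, zed ℓ hpos 0⟩ = 0 := by
    have h := hrow ⟨0, zed ℓ hpos 0⟩
    have hg : ∀ u : Σ j' : Fin k, Fin (ℓ j'), Pm ℓ hpos ⟨0, zed ℓ hpos 0⟩ u =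
        (fun _ : Fin k => (1:ℝ)) u.1 := by
      intro u; simp [Pm, zed]
    rw [Finset.sum_congr rfl (fun u _ => by rw [hg u]), hsum (fun _ : Fin k => (1:ℝ))] at h
    have hrw : ∀ j : Fin k, (1:ℝ) * ((ℓ j : ℝ) * x ⟨j, zed ℓ hpos j⟩)
        = (ℓ j : ℝ) * x ⟨0, zed ℓ hpos 0⟩ := by
      intro j
      rw [hc j]
      ring
    rw [Finset.sum_congr rfl (fun j _ => hrw j), ← Finset.sum_mul] at h
    have hspos : (0:ℝ) < ∑ j : Fin k, (ℓ j : ℝ) := by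
      apply Finset.sum_pos
      · intro j _
        exact_mod_cast hpos j
      · exact Finset.univ_nonempty
    rcases mul_eq_zero.mp h with h' | h'
    · exact absurd h' (ne_of_gt hspos)
    · exact h'
  funext u
  obtain ⟨j, i⟩ := u
  rw [Pi.zero_apply, hconst j i, hc j, hc0]

lemma pm_det [NeZero k] (hpos : ∀ j, 1 ≤ ℓ j) : (Pm ℓ hpos).det ≠ 0 := by
  intro h
  rw [← Matrix.exists_mulVec_eq_zero_iff] at h
  obtain ⟨x, hx0, hx⟩ := h
  exact hx0 (pm_ker ℓ hpos x hx)

lemma fin_prod {m : ℕ} (hm : 0 < m) (a b : Polynomial ℝ) :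
    ∏ i : Fin m, (if (i : ℕ) = 0 then a else b) = a * b ^ (m - 1) := by
  rw [← Finset.prod_filter_mul_prod_filter_not Finset.univ (fun i : Fin m => (i : ℕ) = 0)]
  have h1 : Finset.univ.filter (fun i : Fin m => (i : ℕ) = 0) = {(⟨0, hm⟩ : Fin m)} := by
    ext i
    simp [Fin.ext_iff]
  have hcards := Finset.card_filter_add_card_filter_not
    (s := (Finset.univ : Finset (Fin m))) (p := fun i : Fin m => (i : ℕ) = 0)
  have h2 : (Finset.univ.filter (fun i : Fin m => ¬ (i : ℕ) = 0)).card = m - 1 := by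
    rw [h1] at hcards
    simp only [Finset.card_singleton, Finset.card_univ, Fintype.card_fin] at hcards
    omega
  have e1 : ∏ i ∈ Finset.univ.filter (fun i : Fin m => (i : ℕ) = 0),
      (if (i : ℕ) = 0 then a else b) = a := by
    rw [Finset.prod_congr rfl (fun i hi => by
      rw [if_pos (Finset.mem_filter.mp hi).2]), h1, Finset.prod_singleton]
  have e2 : ∏ i ∈ Finset.univ.filter (fun i : Fin m => ¬ (i : ℕ) = 0),
      (if (i : ℕ) = 0 then a else b) = b ^ (m - 1) := by
    rw [Finset.prod_congr rfl (fun i hi => by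
      rw [if_neg (Finset.mem_filter.mp hi).2]), Finset.prod_const, h2]
  rw [e1, e2]

lemma fink_prod {k : ℕ} [NeZero k] (a : Fin k → Polynomial ℝ) (b : Polynomial ℝ)
    (ha : ∀ j : Fin k, j ≠ 0 → a j = b) :
    ∏ j : Fin k, a j = a 0 * b ^ (k - 1) := by
  rw [← Finset.prod_filter_mul_prod_filter_not Finset.univ (fun j : Fin k => j = 0)]
  have h1 : Finset.univ.filter (fun j : Fin k => j = 0) = {(0 : Fin k)} := by
    ext j
    simp
  have hcards := Finset.card_filter_add_card_filter_not
    (s := (Finset.univ : Finset (Fin k))) (p := fun j : Fin k => j = 0)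
  have h2 : (Finset.univ.filter (fun j : Fin k => ¬ j = 0)).card = k - 1 := by
    rw [h1] at hcards
    simp only [Finset.card_singleton, Finset.card_univ, Fintype.card_fin] at hcards
    omega
  have e1 : ∏ j ∈ Finset.univ.filter (fun j : Fin k => j = 0), a j = a 0 := by
    rw [h1, Finset.prod_singleton]
  have e2 : ∏ j ∈ Finset.univ.filter (fun j : Fin k => ¬ j = 0), a j = b ^ (k - 1) := by
    rw [Finset.prod_congr rfl (fun j hj => ha j (Finset.mem_filter.mp hj).2),
      Finset.prod_const, h2]
  rw [e1, e2]

end DLaux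

/-- The distance Laplacian spectrum of the complete `k`-partite graph
`K_{ℓ₁,…,ℓ_k}` on `n = ℓ₁ + ⋯ + ℓ_k` vertices (with `ℓ₁ ≥ ⋯ ≥ ℓ_k ≥ 1`, `k ≥ 2`)
consists of `n + ℓ_j` with multiplicity `ℓ_j - 1` for each part of size at least `2`,
of `n` with multiplicity `k - 1`, and of `0` with multiplicity `1`; equivalently its
characteristic polynomial factors accordingly. -/
theorem stmt3 {k : ℕ} (hk : 2 ≤ k) (ℓ : Fin k → ℕ) (hmono : Antitone ℓ)
    (hpos : ∀ j, 1 ≤ ℓ j) (n : ℕ) (hn : n = ∑ j, ℓ j) :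
    (distLap (completeMultipartiteGraph' ℓ)).charpoly =
      (∏ j ∈ Finset.univ.filter (fun j : Fin k => 2 ≤ ℓ j),
          (X - C ((n : ℝ) + (ℓ j : ℝ))) ^ (ℓ j - 1)) *
        (X - C (n : ℝ)) ^ (k - 1) * X := by
  haveI : NeZero k := ⟨by omega⟩
  have hkey := DLaux.key ℓ hk hpos n hn
  have hdet := DLaux.pm_det ℓ hpos
  set P := DLaux.Pm ℓ hpos with hP
  set DL := distLap (completeMultipartiteGraph' ℓ) with hDL
  set D := Matrix.diagonal (DLaux.dfun ℓ n) with hD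
  have hcm : (P.map C) * DL.charmatrix = D.charmatrix * (P.map C) := by
    unfold Matrix.charmatrix
    rw [mul_sub, sub_mul]
    congr 1
    · exact (Matrix.scalar_commute (X : Polynomial ℝ) (fun r => Commute.all X r) (P.map C)).symm
    · rw [RingHom.mapMatrix_apply, RingHom.mapMatrix_apply, ← Matrix.map_mul, hkey,
        Matrix.map_mul]
  have hdet2 := congrArg Matrix.det hcm
  rw [Matrix.det_mul, Matrix.det_mul] at hdet2
  have hmd : (P.map ⇑C).det = C P.det := by
    rw [RingHom.map_det C P, RingHom.mapMatrix_apply]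
  rw [hmd] at hdet2
  have hCne : (C P.det : Polynomial ℝ) ≠ 0 := fun hh => hdet (by
    exact_mod_cast Polynomial.C_eq_zero.mp hh)
  have hchar : DL.charpoly = D.charpoly := by
    apply mul_left_cancel₀ hCne
    rw [Matrix.charpoly, Matrix.charpoly, hdet2, mul_comm]
  rw [hchar]
  have hDcm : D.charmatrix = Matrix.diagonal (fun v => X - C (DLaux.dfun ℓ n v)) := by
    refine Matrix.ext fun i j => ?_
    by_cases h : i = j
    · subst h
      rw [Matrix.charmatrix_apply_eq, Matrix.diagonal_apply_eq, hD, Matrix.diagonal_apply_eq]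
    · rw [Matrix.charmatrix_apply_ne _ _ _ h, Matrix.diagonal_apply_ne _ h, hD,
        Matrix.diagonal_apply_ne _ h]
      simp
  rw [Matrix.charpoly, hDcm, Matrix.det_diagonal, ← Finset.univ_sigma_univ, Finset.prod_sigma]
  have hinner : ∀ j : Fin k, ∏ i : Fin (ℓ j), (X - C (DLaux.dfun ℓ n ⟨j, i⟩))
      = (if j = 0 then X else X - C (n : ℝ)) * (X - C ((n:ℝ) + (ℓ j : ℝ))) ^ (ℓ j - 1) := by
    intro j
    have hpt : ∀ i : Fin (ℓ j), X - C (DLaux.dfun ℓ n ⟨j, i⟩)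
        = if (i : ℕ) = 0 then (if j = 0 then X else X - C (n : ℝ))
            else X - C ((n:ℝ) + (ℓ j : ℝ)) := by
      intro i
      simp only [DLaux.dfun]
      by_cases hi : (i : ℕ) = 0
      · by_cases hj : j = 0 <;> simp [hi, hj]
      · simp [hi]
    rw [Finset.prod_congr rfl (fun i _ => hpt i), DLaux.fin_prod (hpos j)]
  rw [Finset.prod_congr rfl (fun j _ => hinner j), Finset.prod_mul_distrib,
    DLaux.fink_prod (fun j => if j = 0 then X else X - C (n : ℝ)) (X - C (n : ℝ))
      (fun j hj => if_neg hj)]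
  have hfilter : ∏ j : Fin k, (X - C ((n:ℝ) + (ℓ j : ℝ))) ^ (ℓ j - 1)
      = ∏ j ∈ Finset.univ.filter (fun j : Fin k => 2 ≤ ℓ j),
          (X - C ((n : ℝ) + (ℓ j : ℝ))) ^ (ℓ j - 1) := by
    rw [← Finset.prod_filter_mul_prod_filter_not Finset.univ (fun j : Fin k => 2 ≤ ℓ j)]
    have : ∏ j ∈ Finset.univ.filter (fun j : Fin k => ¬ 2 ≤ ℓ j),
        (X - C ((n:ℝ) + (ℓ j : ℝ))) ^ (ℓ j - 1) = 1 := by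
      apply Finset.prod_eq_one
      intro j hj
      have h2 := (Finset.mem_filter.mp hj).2
      have h1 := hpos j
      have : ℓ j - 1 = 0 := by omega
      rw [this, pow_zero]
    rw [this, mul_one]
  rw [hfilter, if_pos rfl]
  ring
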